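/- arXiv:1003.5252 — 2 statements merged into one kernel-verified Lean document; each statement's English description precedes it below -/
import Mathlib

section
/- Let d be an odd positive integer, χ : ℤ → ℂ be d-periodic, and ξ ∈ ℂ with ξ^{d w_i w_j} + 1 ≠ 0 for all pairs i,j, where w₁, w₂, w₃ are positive integers. Then for all n ≥ 0 and y₁,y₂,y₃ ∈ ℂ: ∑_{k+l+m=n} (n!/(k!l!m!)) E_{k,χ,ξ^{w₂w₃}}(w₁y₁) E_{l,χ,ξ^{w₁w₃}}(w₂y₂) E_{m,χ,ξ^{w₁w₂}}(w₃y₃) w₁^{l+m} w₂^{k+m} w₃^{k+l} is invariant under every permutation of the index set {1,2,3} (simultaneously permuting the w's, the twisting exponents, and the order of the three Euler-polynomial factors accordingly); in particular the six expressions obtained by the six permutations of (w₁,w₂,w₃) are all equal. -/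
open Finset PowerSeries

/-- Generating function of the generalized twisted Euler polynomials:
`2 e^{xt} (ξ^d e^{dt}+1)⁻¹ ∑_{a=0}^{d-1} (-1)^a χ(a) ξ^a e^{at}` in `ℂ[[t]]`. -/
noncomputable def Egf (d : ℕ) (χ : ℤ → ℂ) (ξ x : ℂ) : PowerSeries ℂ :=
  2 * rescale x (exp ℂ) * (ξ ^ d • rescale (d : ℂ) (exp ℂ) + 1)⁻¹ *
    ∑ a ∈ Finset.range d, ((-1 : ℂ) ^ a * χ a * ξ ^ a) • rescale (a : ℂ) (exp ℂ)

/-- The generalized twisted Euler polynomial `E_{n,χ,ξ}(x)`. -/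
noncomputable def E (d : ℕ) (χ : ℤ → ℂ) (ξ x : ℂ) (n : ℕ) : ℂ :=
  (n.factorial : ℂ) * PowerSeries.coeff n (Egf d χ ξ x)

/-- The alternating generalized twisted power sum `T_k(m; χ, ξ)`. -/
noncomputable def T (m : ℕ) (χ : ℤ → ℂ) (ξ : ℂ) (k : ℕ) : ℂ :=
  ∑ a ∈ Finset.range (m + 1), (-1 : ℂ) ^ a * χ a * ξ ^ a * (a : ℂ) ^ k


/-- The triple sum of Theorem 1, as a function of `(w₁, w₂, w₃)`. -/
noncomputable def S (d : ℕ) (χ : ℤ → ℂ) (ξ : ℂ) (n : ℕ) (y₁ y₂ y₃ : ℂ)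
    (u v w : ℕ) : ℂ :=
  ∑ k ∈ Finset.range (n + 1), ∑ l ∈ Finset.range (n + 1 - k),
    (n.factorial : ℂ) / ((k.factorial : ℂ) * (l.factorial : ℂ) * ((n - k - l).factorial : ℂ)) *
      E d χ (ξ ^ (v * w)) ((u : ℂ) * y₁) k *
      E d χ (ξ ^ (u * w)) ((v : ℂ) * y₂) l *
      E d χ (ξ ^ (u * v)) ((w : ℂ) * y₃) (n - k - l) *
      (u : ℂ) ^ (l + (n - k - l)) * (v : ℂ) ^ (k + (n - k - l)) * (w : ℂ) ^ (k + l)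

/-! ### Auxiliary lemmas -/

lemma rescale_C' (c r : ℂ) : rescale c (C r) = C r := by
  ext n
  simp only [coeff_rescale, coeff_C]
  split_ifs with h <;> simp [h]

lemma constantCoeff_rescale' (c : ℂ) (f : PowerSeries ℂ) :
    constantCoeff (rescale c f) = constantCoeff f := by
  rw [← coeff_zero_eq_constantCoeff, coeff_rescale, pow_zero, one_mul,
    coeff_zero_eq_constantCoeff]

lemma rescale_inv' (c : ℂ) (f : PowerSeries ℂ) (h : constantCoeff f ≠ 0) :
    rescale c f⁻¹ = (rescale c f)⁻¹ := by
  have h2 : constantCoeff (rescale c f) ≠ 0 := by rwa [constantCoeff_rescale']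
  rw [PowerSeries.eq_inv_iff_mul_eq_one h2, ← map_mul,
    PowerSeries.inv_mul_cancel _ h, map_one]

lemma rescale_smul' (c a : ℂ) (f : PowerSeries ℂ) :
    rescale c (a • f) = a • rescale c f := by
  rw [smul_eq_C_mul, map_mul, rescale_C', smul_eq_C_mul]

lemma coeff_mul_mul (f g h : PowerSeries ℂ) (n : ℕ) :
    coeff n (f * g * h) = ∑ k ∈ Finset.range (n + 1), ∑ l ∈ Finset.range (n + 1 - k),
      coeff k f * coeff l g * coeff (n - k - l) h := by
  rw [mul_assoc, coeff_mul, Finset.Nat.sum_antidiagonal_eq_sum_range_succ_mk]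
  refine Finset.sum_congr rfl fun k hk => ?_
  rw [coeff_mul, Finset.Nat.sum_antidiagonal_eq_sum_range_succ_mk, Finset.mul_sum]
  have hk' : k ≤ n := Nat.lt_succ_iff.mp (Finset.mem_range.mp hk)
  rw [show n + 1 - k = n - k + 1 from by omega]
  exact Finset.sum_congr rfl fun l hl => by rw [mul_assoc]

lemma rescale_Egf (d : ℕ) (χ : ℤ → ℂ) (η x c : ℂ) (h : η ^ d + 1 ≠ 0) :
    rescale c (Egf d χ η x) =
      rescale (x * c) (exp ℂ) *
        (2 * (η ^ d • rescale ((d : ℂ) * c) (exp ℂ) + 1)⁻¹ *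
          ∑ a ∈ Finset.range d, ((-1 : ℂ) ^ a * χ a * η ^ a) • rescale ((a : ℂ) * c) (exp ℂ)) := by
  have hc : constantCoeff (η ^ d • rescale (d : ℂ) (exp ℂ) + 1) ≠ 0 := by
    rw [map_add, map_one, smul_eq_C_mul, map_mul, constantCoeff_C,
      constantCoeff_rescale', constantCoeff_exp, mul_one]
    exact h
  rw [Egf, map_mul, map_mul, map_mul, rescale_inv' _ _ hc, map_add, map_one,
    rescale_smul', rescale_rescale, rescale_rescale, map_sum]
  rw [map_ofNat]
  have hs : ∀ a ∈ Finset.range d,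
      rescale c (((-1 : ℂ) ^ a * χ a * η ^ a) • rescale (a : ℂ) (exp ℂ)) =
        ((-1 : ℂ) ^ a * χ a * η ^ a) • rescale ((a : ℂ) * c) (exp ℂ) := by
    intro a _
    rw [rescale_smul', rescale_rescale]
  rw [Finset.sum_congr rfl hs]
  ring

/-- The symmetric factor `2 (ξ^{dm} e^{dmt}+1)⁻¹ ∑_a (-1)^a χ(a) ξ^{am} e^{amt}`. -/
noncomputable def K (d : ℕ) (χ : ℤ → ℂ) (ξ : ℂ) (m : ℕ) : PowerSeries ℂ :=
  2 * ((ξ ^ m) ^ d • rescale ((d : ℂ) * (m : ℂ)) (exp ℂ) + 1)⁻¹ *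
    ∑ a ∈ Finset.range d, ((-1 : ℂ) ^ a * χ a * (ξ ^ m) ^ a) • rescale ((a : ℂ) * (m : ℂ)) (exp ℂ)

lemma Skey (d : ℕ) (χ : ℤ → ℂ) (ξ : ℂ) (n : ℕ) (y₁ y₂ y₃ : ℂ) (u v w : ℕ)
    (h1 : (ξ ^ (v * w)) ^ d + 1 ≠ 0) (h2 : (ξ ^ (u * w)) ^ d + 1 ≠ 0)
    (h3 : (ξ ^ (u * v)) ^ d + 1 ≠ 0) :
    S d χ ξ n y₁ y₂ y₃ u v w =
      (n.factorial : ℂ) * coeff n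
        (rescale ((u : ℂ) * (v : ℂ) * (w : ℂ) * (y₁ + y₂ + y₃)) (exp ℂ) *
          (K d χ ξ (v * w) * K d χ ξ (u * w) * K d χ ξ (u * v))) := by
  have key : rescale ((u : ℂ) * (v : ℂ) * (w : ℂ) * (y₁ + y₂ + y₃)) (exp ℂ) *
      (K d χ ξ (v * w) * K d χ ξ (u * w) * K d χ ξ (u * v)) =
      rescale (((v * w : ℕ) : ℂ)) (Egf d χ (ξ ^ (v * w)) ((u : ℂ) * y₁)) *
      rescale (((u * w : ℕ) : ℂ)) (Egf d χ (ξ ^ (u * w)) ((v : ℂ) * y₂)) *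
      rescale (((u * v : ℕ) : ℂ)) (Egf d χ (ξ ^ (u * v)) ((w : ℂ) * y₃)) := by
    rw [rescale_Egf _ _ _ _ _ h1, rescale_Egf _ _ _ _ _ h2, rescale_Egf _ _ _ _ _ h3]
    have e1 : ((u : ℂ) * y₁) * ((v * w : ℕ) : ℂ) = (u : ℂ) * (v : ℂ) * (w : ℂ) * y₁ := by
      push_cast; ring
    have e2 : ((v : ℂ) * y₂) * ((u * w : ℕ) : ℂ) = (u : ℂ) * (v : ℂ) * (w : ℂ) * y₂ := by
      push_cast; ring
    have e3 : ((w : ℂ) * y₃) * ((u * v : ℕ) : ℂ) = (u : ℂ) * (v : ℂ) * (w : ℂ) * y₃ := by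
      push_cast; ring
    rw [e1, e2, e3]
    rw [show (K d χ ξ (v * w)) = 2 * ((ξ ^ (v*w)) ^ d • rescale ((d : ℂ) * ((v*w : ℕ) : ℂ)) (exp ℂ) + 1)⁻¹ *
      ∑ a ∈ Finset.range d, ((-1 : ℂ) ^ a * χ a * (ξ ^ (v*w)) ^ a) • rescale ((a : ℂ) * ((v*w : ℕ) : ℂ)) (exp ℂ) from rfl] at *
    rw [show (K d χ ξ (u * w)) = 2 * ((ξ ^ (u*w)) ^ d • rescale ((d : ℂ) * ((u*w : ℕ) : ℂ)) (exp ℂ) + 1)⁻¹ *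
      ∑ a ∈ Finset.range d, ((-1 : ℂ) ^ a * χ a * (ξ ^ (u*w)) ^ a) • rescale ((a : ℂ) * ((u*w : ℕ) : ℂ)) (exp ℂ) from rfl]
    rw [show (K d χ ξ (u * v)) = 2 * ((ξ ^ (u*v)) ^ d • rescale ((d : ℂ) * ((u*v : ℕ) : ℂ)) (exp ℂ) + 1)⁻¹ *
      ∑ a ∈ Finset.range d, ((-1 : ℂ) ^ a * χ a * (ξ ^ (u*v)) ^ a) • rescale ((a : ℂ) * ((u*v : ℕ) : ℂ)) (exp ℂ) from rfl]
    rw [show (u : ℂ) * (v : ℂ) * (w : ℂ) * (y₁ + y₂ + y₃) =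
      (u : ℂ) * (v : ℂ) * (w : ℂ) * y₁ + ((u : ℂ) * (v : ℂ) * (w : ℂ) * y₂ +
        (u : ℂ) * (v : ℂ) * (w : ℂ) * y₃) from by ring,
      ← exp_mul_exp_eq_exp_add, ← exp_mul_exp_eq_exp_add]
    ring
  rw [key, coeff_mul_mul, Finset.mul_sum]
  refine Finset.sum_congr rfl fun k hk => ?_
  rw [Finset.mul_sum]
  refine Finset.sum_congr rfl fun l hl => ?_
  simp only [coeff_rescale, E]
  have hkf : (k.factorial : ℂ) ≠ 0 := Nat.cast_ne_zero.mpr k.factorial_ne_zero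
  have hlf : (l.factorial : ℂ) ≠ 0 := Nat.cast_ne_zero.mpr l.factorial_ne_zero
  have hmf : ((n - k - l).factorial : ℂ) ≠ 0 := Nat.cast_ne_zero.mpr (n - k - l).factorial_ne_zero
  field_simp
  push_cast
  ring

/-- Theorem 1: the expression is invariant under all six permutations of `(w₁,w₂,w₃)`. -/
theorem theorem1 (d : ℕ) (hd : Odd d) (hd0 : 0 < d)
    (χ : ℤ → ℂ) (hχ : Function.Periodic χ (d : ℤ)) (ξ : ℂ)
    (w : Fin 3 → ℕ) (hw : ∀ i, 0 < w i)
    (hξ : ∀ i j, i ≠ j → ξ ^ (d * w i * w j) + 1 ≠ 0)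
    (n : ℕ) (y₁ y₂ y₃ : ℂ) (σ : Equiv.Perm (Fin 3)) :
    S d χ ξ n y₁ y₂ y₃ (w (σ 0)) (w (σ 1)) (w (σ 2)) =
      S d χ ξ n y₁ y₂ y₃ (w 0) (w 1) (w 2) := by
  have hξ' : ∀ i j : Fin 3, i ≠ j → (ξ ^ (w i * w j)) ^ d + 1 ≠ 0 := by
    intro i j hij
    have h := hξ i j hij
    rwa [show d * w i * w j = (w i * w j) * d from by ring, pow_mul] at h
  rw [Skey d χ ξ n y₁ y₂ y₃ _ _ _
      (hξ' _ _ (σ.injective.ne (by decide : (1 : Fin 3) ≠ 2)))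
      (hξ' _ _ (σ.injective.ne (by decide : (0 : Fin 3) ≠ 2)))
      (hξ' _ _ (σ.injective.ne (by decide : (0 : Fin 3) ≠ 1))),
    Skey d χ ξ n y₁ y₂ y₃ _ _ _
      (hξ' 1 2 (by decide)) (hξ' 0 2 (by decide)) (hξ' 0 1 (by decide))]
  have hprod : w (σ 0) * w (σ 1) * w (σ 2) = w 0 * w 1 * w 2 := by
    have h := Equiv.prod_comp σ w
    simpa [Fin.prod_univ_three] using h
  have hc : ((w (σ 0) : ℂ)) * (w (σ 1) : ℂ) * (w (σ 2) : ℂ) =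
      ((w 0 : ℂ)) * (w 1 : ℂ) * (w 2 : ℂ) := by
    exact_mod_cast congrArg (Nat.cast : ℕ → ℂ) hprod
  have keydiv : ∀ i j k : Fin 3, w i * w j * w k = w 0 * w 1 * w 2 →
      w j * w k = (w 0 * w 1 * w 2) / w i := by
    intro i j k h
    exact (Nat.div_eq_of_eq_mul_right (hw i) (by rw [← h]; ring)).symm
  have d1 : w (σ 1) * w (σ 2) = (w 0 * w 1 * w 2) / w (σ 0) := keydiv _ _ _ hprod
  have d2 : w (σ 0) * w (σ 2) = (w 0 * w 1 * w 2) / w (σ 1) :=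
    keydiv _ _ _ (by rw [← hprod]; ring)
  have d3 : w (σ 0) * w (σ 1) = (w 0 * w 1 * w 2) / w (σ 2) :=
    keydiv _ _ _ (by rw [← hprod]; ring)
  have e1 : w 1 * w 2 = (w 0 * w 1 * w 2) / w 0 := keydiv _ _ _ rfl
  have e2 : w 0 * w 2 = (w 0 * w 1 * w 2) / w 1 := keydiv _ _ _ (by ring)
  have e3 : w 0 * w 1 = (w 0 * w 1 * w 2) / w 2 := keydiv _ _ _ (by ring)
  have hK := Equiv.prod_comp σ (fun i => K d χ ξ ((w 0 * w 1 * w 2) / w i))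
  simp only [Fin.prod_univ_three] at hK
  rw [← d1, ← d2, ← d3, ← e1, ← e2, ← e3] at hK
  rw [hc, hK]
end

section
/- Let d, w₁, w₂, w₃ be odd positive integers, χ : ℤ → ℂ d-periodic, ξ ∈ ℂ. Then for all n ≥ 0: ∑_{k+l+m=n} (n!/(k!l!m!)) T_k(w₁d−1;χ,ξ^{w₃}) T_l(w₂d−1;χ,ξ^{w₁}) T_m(w₃d−1;χ,ξ^{w₂}) w₃^k w₁^l w₂^m = ∑_{k+l+m=n} (n!/(k!l!m!)) T_k(w₁d−1;χ,ξ^{w₂}) T_l(w₃d−1;χ,ξ^{w₁}) T_m(w₂d−1;χ,ξ^{w₃}) w₂^k w₁^l w₃^m. -/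
open Finset PowerSeries

/-! Auxiliary definitions -/

noncomputable def Saux (d : ℕ) (χ : ℤ → ℂ) (ξ : ℂ) (u : ℕ) : PowerSeries ℂ :=
  ∑ a ∈ Finset.range d, ((-1 : ℂ) ^ a * χ a * ξ ^ (a * u)) • rescale ((a * u : ℕ) : ℂ) (exp ℂ)

noncomputable def Haux (w d : ℕ) (ξ : ℂ) (u : ℕ) : PowerSeries ℂ :=
  ∑ j ∈ Finset.range w, ((-1 : ℂ) ^ j * ξ ^ (j * d * u)) • rescale ((j * d * u : ℕ) : ℂ) (exp ℂ)

noncomputable def Qaux (e : ℕ) (χ : ℤ → ℂ) (η : ℂ) (u : ℕ) : PowerSeries ℂ :=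
  ∑ a ∈ Finset.range e, ((-1 : ℂ) ^ a * χ a * η ^ a) • rescale ((a * u : ℕ) : ℂ) (exp ℂ)

lemma coeff_rescale_exp (c : ℂ) (k : ℕ) :
    coeff k (rescale c (exp ℂ)) = c ^ k / k.factorial := by
  rw [coeff_rescale, coeff_exp]
  simp [div_eq_mul_inv]

lemma coeff_Qaux (e : ℕ) (he : 0 < e) (χ : ℤ → ℂ) (η : ℂ) (u k : ℕ) :
    coeff k (Qaux e χ η u) = T (e - 1) χ η k * (u : ℂ) ^ k / k.factorial := by
  rw [Qaux, map_sum, T, Nat.sub_add_cancel he, Finset.sum_mul, Finset.sum_div]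
  refine Finset.sum_congr rfl fun a _ => ?_
  rw [coeff_smul, smul_eq_mul, coeff_rescale_exp]
  push_cast
  rw [mul_pow]
  ring

lemma rescale_exp_pow (c : ℂ) (m : ℕ) :
    (rescale c (exp ℂ)) ^ m = rescale ((m : ℂ) * c) (exp ℂ) := by
  rw [← map_pow, exp_pow_eq_rescale_exp, rescale_rescale]

lemma sum_range_mul_aux {M : Type*} [AddCommMonoid M] (f : ℕ → M) (w d : ℕ) :
    ∑ a ∈ Finset.range (w * d), f a
      = ∑ j ∈ Finset.range w, ∑ a ∈ Finset.range d, f (j * d + a) := by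
  induction w with
  | zero => simp
  | succ w ih => rw [Nat.succ_mul, Finset.sum_range_add, ih, Finset.sum_range_succ]

lemma Qaux_eq (d w : ℕ) (hd : Odd d) (χ : ℤ → ℂ) (hχ : Function.Periodic χ (d : ℤ))
    (ξ : ℂ) (u : ℕ) :
    Qaux (w * d) χ (ξ ^ u) u = Haux w d ξ u * Saux d χ ξ u := by
  rw [Qaux, sum_range_mul_aux, Haux, Saux, Finset.sum_mul_sum]
  refine Finset.sum_congr rfl fun j _ => Finset.sum_congr rfl fun a _ => ?_
  rw [smul_mul_smul_comm, exp_mul_exp_eq_exp_add]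
  have hχ' : χ ((j * d + a : ℕ) : ℤ) = χ a := by
    push_cast
    rw [add_comm]
    exact (hχ.nat_mul j) a
  have hsign : (-1 : ℂ) ^ (j * d + a) = (-1 : ℂ) ^ j * (-1 : ℂ) ^ a := by
    rw [pow_add, pow_mul', Odd.neg_one_pow hd]
  have hcast : (((j * d + a) * u : ℕ) : ℂ) = ((j * d * u : ℕ) : ℂ) + ((a * u : ℕ) : ℂ) := by
    push_cast; ring
  rw [hχ', hsign, hcast, ← pow_mul]
  congr 1
  ring_nf

lemma Haux_eq_geom (w d : ℕ) (ξ : ℂ) (u : ℕ) (hu : Odd u) :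
    Haux w d ξ u
      = ∑ j ∈ Finset.range w, ((-(ξ ^ d • rescale (d : ℂ) (exp ℂ))) ^ u) ^ j := by
  rw [Haux]
  refine Finset.sum_congr rfl fun j _ => ?_
  have hneg : -(ξ ^ d • rescale (d : ℂ) (exp ℂ)) = (-(ξ ^ d)) • rescale (d : ℂ) (exp ℂ) :=
    (neg_smul _ _).symm
  conv_rhs => rw [← pow_mul, hneg, smul_pow, rescale_exp_pow]
  have h1 : (ξ ^ d) ^ (u * j) = ξ ^ (j * d * u) := by rw [← pow_mul]; ring_nf
  have h2 : ((u * j : ℕ) : ℂ) * (d : ℂ) = ((j * d * u : ℕ) : ℂ) := by push_cast; ring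
  have h3 : (-(ξ ^ d) : ℂ) ^ (u * j) = (-1) ^ j * ξ ^ (j * d * u) := by
    rw [neg_pow, pow_mul, Odd.neg_one_pow hu, h1]
  rw [h2, h3]

lemma geom_sum_zero' (w : ℕ) (hw : 0 < w) :
    ∑ j ∈ Finset.range w, (0 : PowerSeries ℂ) ^ j = 1 := by
  rw [Finset.sum_eq_single 0]
  · simp
  · intro b _ hb; exact zero_pow hb
  · intro h; simp at h; omega

lemma rpow_sub_one_ne (d : ℕ) (hd0 : 0 < d) (ξ : ℂ) (hξ : ξ ≠ 0) (w : ℕ) (hw : 0 < w) :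
    (-(ξ ^ d • rescale (d : ℂ) (exp ℂ))) ^ w - 1 ≠ 0 := by
  intro h
  have h1 := congrArg (coeff (R := ℂ) 1) h
  have hneg : -(ξ ^ d • rescale (d : ℂ) (exp ℂ)) = (-(ξ ^ d)) • rescale (d : ℂ) (exp ℂ) :=
    (neg_smul _ _).symm
  rw [hneg, smul_pow, rescale_exp_pow] at h1
  simp only [map_sub, map_zero, map_smul, coeff_rescale_exp, smul_eq_mul, coeff_one,
    Nat.factorial_one, Nat.cast_one, pow_one, div_one, if_neg one_ne_zero, sub_zero] at h1
  rcases mul_eq_zero.1 h1 with h' | h'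
  · exact (pow_ne_zero w (neg_ne_zero.2 (pow_ne_zero d hξ))) h'
  · have hw' : (w : ℂ) ≠ 0 := Nat.cast_ne_zero.2 hw.ne'
    have hd' : (d : ℂ) ≠ 0 := Nat.cast_ne_zero.2 hd0.ne'
    exact (mul_ne_zero hw' hd') h'

lemma Haux_sym (d w₁ w₂ w₃ : ℕ) (hd0 : 0 < d)
    (hw₁ : Odd w₁) (hw₂ : Odd w₂) (hw₃ : Odd w₃)
    (hw₁0 : 0 < w₁) (hw₂0 : 0 < w₂) (hw₃0 : 0 < w₃) (ξ : ℂ) :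
    Haux w₁ d ξ w₃ * Haux w₂ d ξ w₁ * Haux w₃ d ξ w₂
      = Haux w₁ d ξ w₂ * Haux w₃ d ξ w₁ * Haux w₂ d ξ w₃ := by
  set r : PowerSeries ℂ := -(ξ ^ d • rescale (d : ℂ) (exp ℂ)) with hr
  rw [Haux_eq_geom _ _ _ _ hw₃, Haux_eq_geom _ _ _ _ hw₁, Haux_eq_geom _ _ _ _ hw₂,
    Haux_eq_geom _ _ _ _ hw₂, Haux_eq_geom _ _ _ _ hw₁, Haux_eq_geom _ _ _ _ hw₃]
  by_cases hξ : ξ = 0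
  · have hr0 : r = 0 := by
      simp [hr, hξ, zero_pow hd0.ne']
    have hpow : ∀ u : ℕ, 0 < u → r ^ u = 0 := fun u hu => by
      rw [hr0, zero_pow hu.ne']
    rw [hpow _ hw₁0, hpow _ hw₂0, hpow _ hw₃0,
      geom_sum_zero' _ hw₁0, geom_sum_zero' _ hw₂0, geom_sum_zero' _ hw₃0]
  · apply mul_right_cancel₀ (b := (r ^ w₁ - 1) * ((r ^ w₂ - 1) * (r ^ w₃ - 1)))
      (mul_ne_zero (rpow_sub_one_ne d hd0 ξ hξ w₁ hw₁0)
        (mul_ne_zero (rpow_sub_one_ne d hd0 ξ hξ w₂ hw₂0)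
          (rpow_sub_one_ne d hd0 ξ hξ w₃ hw₃0)))
    have g : ∀ a b : ℕ, (∑ j ∈ Finset.range a, (r ^ b) ^ j) * (r ^ b - 1) = r ^ (b * a) - 1 := by
      intro a b
      rw [geom_sum_mul, ← pow_mul]
    calc (∑ j ∈ Finset.range w₁, (r ^ w₃) ^ j) * (∑ j ∈ Finset.range w₂, (r ^ w₁) ^ j) *
          (∑ j ∈ Finset.range w₃, (r ^ w₂) ^ j) *
          ((r ^ w₁ - 1) * ((r ^ w₂ - 1) * (r ^ w₃ - 1)))
        = ((∑ j ∈ Finset.range w₁, (r ^ w₃) ^ j) * (r ^ w₃ - 1)) *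
          (((∑ j ∈ Finset.range w₂, (r ^ w₁) ^ j) * (r ^ w₁ - 1)) *
           ((∑ j ∈ Finset.range w₃, (r ^ w₂) ^ j) * (r ^ w₂ - 1))) := by ring
      _ = (r ^ (w₃ * w₁) - 1) * ((r ^ (w₁ * w₂) - 1) * (r ^ (w₂ * w₃) - 1)) := by
          rw [g, g, g]
      _ = ((∑ j ∈ Finset.range w₁, (r ^ w₂) ^ j) * (r ^ w₂ - 1)) *
          (((∑ j ∈ Finset.range w₃, (r ^ w₁) ^ j) * (r ^ w₁ - 1)) *
           ((∑ j ∈ Finset.range w₂, (r ^ w₃) ^ j) * (r ^ w₃ - 1))) := by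
          rw [g, g, g, Nat.mul_comm w₂ w₁, Nat.mul_comm w₁ w₃, Nat.mul_comm w₃ w₂]
          ring
      _ = _ := by ring

lemma coeff_mul3 (A B C : PowerSeries ℂ) (n : ℕ) :
    coeff n (A * (B * C))
      = ∑ k ∈ Finset.range (n + 1), ∑ l ∈ Finset.range (n + 1 - k),
          coeff k A * (coeff l B * coeff (n - k - l) C) := by
  rw [coeff_mul, Finset.Nat.sum_antidiagonal_eq_sum_range_succ_mk]
  refine Finset.sum_congr rfl fun k hk => ?_
  rw [coeff_mul, Finset.Nat.sum_antidiagonal_eq_sum_range_succ_mk, Finset.mul_sum]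
  have hk' : n + 1 - k = n - k + 1 := by
    have := Finset.mem_range.1 hk; omega
  rw [hk']

lemma sum_eq_coeff (e₁ e₂ e₃ : ℕ) (h₁ : 0 < e₁) (h₂ : 0 < e₂) (h₃ : 0 < e₃)
    (χ : ℤ → ℂ) (η₁ η₂ η₃ : ℂ) (u₁ u₂ u₃ : ℕ) (n : ℕ) :
    (∑ k ∈ Finset.range (n + 1), ∑ l ∈ Finset.range (n + 1 - k),
        (n.factorial : ℂ) /
            ((k.factorial : ℂ) * (l.factorial : ℂ) * ((n - k - l).factorial : ℂ)) *
          T (e₁ - 1) χ η₁ k * T (e₂ - 1) χ η₂ l * T (e₃ - 1) χ η₃ (n - k - l) *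
          (u₁ : ℂ) ^ k * (u₂ : ℂ) ^ l * (u₃ : ℂ) ^ (n - k - l))
      = (n.factorial : ℂ) *
          coeff n (Qaux e₁ χ η₁ u₁ * (Qaux e₂ χ η₂ u₂ * Qaux e₃ χ η₃ u₃)) := by
  rw [coeff_mul3, Finset.mul_sum]
  refine Finset.sum_congr rfl fun k _ => ?_
  rw [Finset.mul_sum]
  refine Finset.sum_congr rfl fun l _ => ?_
  rw [coeff_Qaux _ h₁, coeff_Qaux _ h₂, coeff_Qaux _ h₃]
  have hk0 : (k.factorial : ℂ) ≠ 0 := Nat.cast_ne_zero.2 k.factorial_ne_zero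
  have hl0 : (l.factorial : ℂ) ≠ 0 := Nat.cast_ne_zero.2 l.factorial_ne_zero
  have hm0 : ((n - k - l).factorial : ℂ) ≠ 0 := Nat.cast_ne_zero.2 (n - k - l).factorial_ne_zero
  field_simp


/-- Theorem 8: two symmetries among alternating generalized twisted power sums. -/
theorem theorem8 (d w₁ w₂ w₃ : ℕ) (hd : Odd d) (hd0 : 0 < d)
    (hw₁ : Odd w₁) (hw₂ : Odd w₂) (hw₃ : Odd w₃)
    (hw₁0 : 0 < w₁) (hw₂0 : 0 < w₂) (hw₃0 : 0 < w₃)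
    (χ : ℤ → ℂ) (hχ : Function.Periodic χ (d : ℤ)) (ξ : ℂ) (n : ℕ) :
    (∑ k ∈ Finset.range (n + 1), ∑ l ∈ Finset.range (n + 1 - k),
        (n.factorial : ℂ) /
            ((k.factorial : ℂ) * (l.factorial : ℂ) * ((n - k - l).factorial : ℂ)) *
          T (w₁ * d - 1) χ (ξ ^ w₃) k * T (w₂ * d - 1) χ (ξ ^ w₁) l *
          T (w₃ * d - 1) χ (ξ ^ w₂) (n - k - l) *
          (w₃ : ℂ) ^ k * (w₁ : ℂ) ^ l * (w₂ : ℂ) ^ (n - k - l)) =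
      ∑ k ∈ Finset.range (n + 1), ∑ l ∈ Finset.range (n + 1 - k),
        (n.factorial : ℂ) /
            ((k.factorial : ℂ) * (l.factorial : ℂ) * ((n - k - l).factorial : ℂ)) *
          T (w₁ * d - 1) χ (ξ ^ w₂) k * T (w₃ * d - 1) χ (ξ ^ w₁) l *
          T (w₂ * d - 1) χ (ξ ^ w₃) (n - k - l) *
          (w₂ : ℂ) ^ k * (w₁ : ℂ) ^ l * (w₃ : ℂ) ^ (n - k - l) := by
  have p1 : 0 < w₁ * d := Nat.mul_pos hw₁0 hd0
  have p2 : 0 < w₂ * d := Nat.mul_pos hw₂0 hd0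
  have p3 : 0 < w₃ * d := Nat.mul_pos hw₃0 hd0
  rw [sum_eq_coeff (w₁ * d) (w₂ * d) (w₃ * d) p1 p2 p3 χ (ξ ^ w₃) (ξ ^ w₁) (ξ ^ w₂) w₃ w₁ w₂ n,
    sum_eq_coeff (w₁ * d) (w₃ * d) (w₂ * d) p1 p3 p2 χ (ξ ^ w₂) (ξ ^ w₁) (ξ ^ w₃) w₂ w₁ w₃ n]
  have hprod : Qaux (w₁ * d) χ (ξ ^ w₃) w₃ *
        (Qaux (w₂ * d) χ (ξ ^ w₁) w₁ * Qaux (w₃ * d) χ (ξ ^ w₂) w₂)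
      = Qaux (w₁ * d) χ (ξ ^ w₂) w₂ *
        (Qaux (w₃ * d) χ (ξ ^ w₁) w₁ * Qaux (w₂ * d) χ (ξ ^ w₃) w₃) := by
    rw [Qaux_eq d w₁ hd χ hχ ξ w₃, Qaux_eq d w₂ hd χ hχ ξ w₁, Qaux_eq d w₃ hd χ hχ ξ w₂,
      Qaux_eq d w₁ hd χ hχ ξ w₂, Qaux_eq d w₃ hd χ hχ ξ w₁, Qaux_eq d w₂ hd χ hχ ξ w₃]
    have hs := Haux_sym d w₁ w₂ w₃ hd0 hw₁ hw₂ hw₃ hw₁0 hw₂0 hw₃0 ξ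
    linear_combination (Saux d χ ξ w₁ * Saux d χ ξ w₂ * Saux d χ ξ w₃) * hs
  rw [hprod]
end
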